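/- arXiv:2402.11492 — 4 statements merged into one kernel-verified Lean document; each statement's English description precedes it below -/
import Mathlib

section
/- Let e solve the linear ODE ė(t) = (I ⊗ A)e(t) - (L̃ ⊗ BK)e(t) on ℝ^{Nn}, and suppose v ∈ ℂⁿ satisfies vᵀA = λvᵀ and vᵀB = 0. Then for each block component e_i, the scalar function vᵀe_i(t) satisfies vᵀe_i(t) = e^{λt} vᵀe_i(0). -/
open Matrix Kronecker

/-- If `e` solves `ė = (I ⊗ A)e - (L̃ ⊗ BK)e` and `v` is a left eigenvector of `A`
annihilated by `Bᵀ` (i.e. `vᵀA = λvᵀ`, `vᵀB = 0`), then each block component satisfies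
`vᵀe_i(t) = e^{λt} vᵀe_i(0)`. -/
theorem left_eigvec_error_dynamics {N n m : ℕ}
    (A : Matrix (Fin n) (Fin n) ℝ) (B : Matrix (Fin n) (Fin m) ℝ)
    (K : Matrix (Fin m) (Fin n) ℝ) (Ltil : Matrix (Fin N) (Fin N) ℝ)
    (e : ℝ → (Fin N × Fin n → ℝ))
    (he : ∀ t, HasDerivAt e
      ((((1 : Matrix (Fin N) (Fin N) ℝ) ⊗ₖ A) - Ltil ⊗ₖ (B * K)) *ᵥ e t) t)
    (lam : ℂ) (v : Fin n → ℂ)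
    (hv1 : (A.map (Complex.ofReal))ᵀ *ᵥ v = lam • v)
    (hv2 : (B.map (Complex.ofReal))ᵀ *ᵥ v = 0)
    (i : Fin N) (t : ℝ) :
    ∑ j, v j * (e t (i, j) : ℂ)
      = Complex.exp (lam * t) * ∑ j, v j * (e 0 (i, j) : ℂ) := by
  set f : ℝ → ℂ := fun s => ∑ j, v j * (e s (i, j) : ℂ) with hf
  have h1 : ∀ j' : Fin n, (∑ j, (A j j' : ℂ) * v j) = lam * v j' := by
    intro j'
    have := congrFun hv1 j'
    simpa [Matrix.mulVec, dotProduct, Matrix.transpose_apply, Matrix.map_apply] using this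
  have h2 : ∀ k : Fin m, (∑ j, (B j k : ℂ) * v j) = 0 := by
    intro k
    have := congrFun hv2 k
    simpa [Matrix.mulVec, dotProduct, Matrix.transpose_apply, Matrix.map_apply] using this
  -- key algebraic identity
  have key : ∀ x : Fin N × Fin n → ℝ,
      (∑ j, v j * (((((1 : Matrix (Fin N) (Fin N) ℝ) ⊗ₖ A) - Ltil ⊗ₖ (B * K)) *ᵥ x) (i, j) : ℂ))
        = lam * ∑ j, v j * (x (i, j) : ℂ) := by
    intro x
    have hinner : ∀ (i' : Fin N) (j' : Fin n),
        (∑ j, v j * ((if i = i' then (A j j' : ℂ) else 0)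
            - (Ltil i i' : ℂ) * ∑ k, (B j k : ℂ) * (K k j' : ℂ)))
          = if i = i' then lam * v j' else 0 := by
      intro i' j'
      simp only [mul_sub]
      rw [Finset.sum_sub_distrib]
      have e1 : ∑ j, v j * (if i = i' then (A j j' : ℂ) else 0)
          = if i = i' then lam * v j' else 0 := by
        by_cases h : i = i'
        · simp only [if_pos h]
          rw [← h1 j']
          exact Finset.sum_congr rfl fun j _ => mul_comm _ _
        · simp [h]
      have e2 : ∑ j, v j * ((Ltil i i' : ℂ) * ∑ k, (B j k : ℂ) * (K k j' : ℂ)) = 0 := by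
        simp only [Finset.mul_sum]
        rw [Finset.sum_comm]
        refine Finset.sum_eq_zero fun k _ => ?_
        have : (∑ j, v j * ((Ltil i i' : ℂ) * ((B j k : ℂ) * (K k j' : ℂ))))
            = ((Ltil i i' : ℂ) * (K k j' : ℂ)) * ∑ j, (B j k : ℂ) * v j := by
          rw [Finset.mul_sum]
          exact Finset.sum_congr rfl fun j _ => by ring
        rw [this, h2 k, mul_zero]
      rw [e1, e2, sub_zero]
    calc
      (∑ j, v j * (((((1 : Matrix (Fin N) (Fin N) ℝ) ⊗ₖ A) - Ltil ⊗ₖ (B * K)) *ᵥ x) (i, j) : ℂ))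
          = ∑ j, v j * ∑ i', ∑ j',
              ((if i = i' then (A j j' : ℂ) else 0)
                - (Ltil i i' : ℂ) * ∑ k, (B j k : ℂ) * (K k j' : ℂ)) * (x (i', j') : ℂ) := by
            refine Finset.sum_congr rfl fun j _ => ?_
            congr 1
            push_cast [Matrix.mulVec, dotProduct, Matrix.sub_apply,
              Matrix.kroneckerMap_apply, Matrix.one_apply, Matrix.mul_apply,
              Fintype.sum_prod_type]
            refine Finset.sum_congr rfl fun i' _ => Finset.sum_congr rfl fun j' _ => ?_
            by_cases h : i = i' <;> simp [h]
      _ = ∑ i', ∑ j', (∑ j, v j * ((if i = i' then (A j j' : ℂ) else 0)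
              - (Ltil i i' : ℂ) * ∑ k, (B j k : ℂ) * (K k j' : ℂ))) * (x (i', j') : ℂ) := by
            simp only [Finset.mul_sum]
            rw [Finset.sum_comm]
            refine Finset.sum_congr rfl fun i' _ => ?_
            rw [Finset.sum_comm]
            refine Finset.sum_congr rfl fun j' _ => ?_
            rw [Finset.sum_mul]
            exact Finset.sum_congr rfl fun j _ => (mul_assoc _ _ _).symm
      _ = ∑ i', ∑ j', (if i = i' then lam * v j' else 0) * (x (i', j') : ℂ) := by
            refine Finset.sum_congr rfl fun i' _ => Finset.sum_congr rfl fun j' _ => ?_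
            rw [hinner]
      _ = lam * ∑ j, v j * (x (i, j) : ℂ) := by
            rw [Finset.sum_eq_single i, Finset.mul_sum]
            · refine Finset.sum_congr rfl fun j _ => ?_
              rw [if_pos rfl]; ring
            · intro i' _ h
              exact Finset.sum_eq_zero fun j' _ => by simp [Ne.symm h]
            · intro h; simp at h
  have hfd : ∀ s, HasDerivAt f (lam * f s) s := by
    intro s
    have hcomp : ∀ j : Fin n, HasDerivAt (fun s => ((e s (i, j) : ℝ) : ℂ))
        ((((((1 : Matrix (Fin N) (Fin N) ℝ) ⊗ₖ A) - Ltil ⊗ₖ (B * K)) *ᵥ e s) (i, j) : ℂ)) s :=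
      fun j => ((hasDerivAt_pi.1 (he s)) (i, j)).ofReal_comp
    have h := HasDerivAt.fun_sum (u := Finset.univ) (fun j _ => (hcomp j).const_mul (v j))
    rw [key (e s)] at h
    exact h
  -- standard exponential ODE argument
  have hg : ∀ s, HasDerivAt (fun s : ℝ => Complex.exp (-(lam * s)) * f s) 0 s := by
    intro s
    have h1' : HasDerivAt (fun s : ℝ => Complex.exp (-(lam * s)))
        (-lam * Complex.exp (-(lam * s))) s := by
      have : HasDerivAt (fun z : ℂ => Complex.exp (-(lam * z)))
          (-lam * Complex.exp (-(lam * s))) (s : ℂ) := by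
        simpa [mul_comm] using (((hasDerivAt_id (s : ℂ)).const_mul lam).neg).cexp
      exact this.comp_ofReal
    have := h1'.fun_mul (hfd s)
    refine this.congr_deriv ?_
    ring
  have hconst : Complex.exp (-(lam * t)) * f t = f 0 := by
    have hdiff : Differentiable ℝ (fun s : ℝ => Complex.exp (-(lam * s)) * f s) :=
      fun s => (hg s).differentiableAt
    have hderiv : ∀ s, deriv (fun s : ℝ => Complex.exp (-(lam * s)) * f s) s = 0 :=
      fun s => (hg s).deriv
    have := is_const_of_deriv_eq_zero hdiff hderiv t 0
    simpa using this
  calc f t = Complex.exp (lam * t) * (Complex.exp (-(lam * t)) * f t) := by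
        rw [← mul_assoc, ← Complex.exp_add]; simp
    _ = Complex.exp (lam * t) * f 0 := by rw [hconst]
end

section
/- Under the previous setup, if Re(λ) ≥ 0 and vᵀe_i(0) ≠ 0 for some i, then vᵀe_i(t) does not converge to 0 as t → ∞; hence the coupled system cannot achieve exponential synchronization to zero error. Consequently, stabilizability of (A,B) is necessary for exponential cluster synchronization from arbitrary initial conditions. -/
open Matrix Kronecker Filter

/-- Necessity of stabilizability (Theorem 2): under `ė = (I ⊗ A)e - (L̃ ⊗ BK)e` with
`vᵀA = λvᵀ`, `vᵀB = 0`, `Re λ ≥ 0` and `vᵀe_i(0) ≠ 0` for some `i`, the scalar `vᵀe_i(t)`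
does not converge to `0` as `t → ∞`, hence the error `e(t)` does not converge to `0`:
the coupled system cannot achieve (exponential) cluster synchronization. -/
theorem no_sync_without_stabilizability {N n m : ℕ}
    (A : Matrix (Fin n) (Fin n) ℝ) (B : Matrix (Fin n) (Fin m) ℝ)
    (K : Matrix (Fin m) (Fin n) ℝ) (Ltil : Matrix (Fin N) (Fin N) ℝ)
    (e : ℝ → (Fin N × Fin n → ℝ))
    (he : ∀ t, HasDerivAt e
      ((((1 : Matrix (Fin N) (Fin N) ℝ) ⊗ₖ A) - Ltil ⊗ₖ (B * K)) *ᵥ e t) t)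
    (lam : ℂ) (v : Fin n → ℂ)
    (hv1 : (A.map (Complex.ofReal))ᵀ *ᵥ v = lam • v)
    (hv2 : (B.map (Complex.ofReal))ᵀ *ᵥ v = 0)
    (hre : 0 ≤ lam.re)
    (i : Fin N)
    (h0 : ∑ j, v j * (e 0 (i, j) : ℂ) ≠ 0) :
    ¬ Tendsto (fun t => ∑ j, v j * (e t (i, j) : ℂ)) atTop (nhds 0) ∧
    ¬ Tendsto e atTop (nhds 0) := by
  have hA : ∀ l, ∑ j, (A j l : ℂ) * v j = lam * v l := by
    intro l
    have := congrFun hv1 l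
    simpa [mulVec, dotProduct, transpose_apply, Matrix.map_apply] using this
  have hB : ∀ p, ∑ j, (B j p : ℂ) * v j = 0 := by
    intro p
    have := congrFun hv2 p
    simpa [mulVec, dotProduct, transpose_apply, Matrix.map_apply] using this
  set y : ℝ → ℂ := fun t => ∑ j, v j * (e t (i, j) : ℂ) with hy_def
  -- the key algebraic identity
  have key : ∀ x : Fin N × Fin n → ℝ,
      ∑ j, v j * ((((((1 : Matrix (Fin N) (Fin N) ℝ) ⊗ₖ A) - Ltil ⊗ₖ (B * K)) *ᵥ x) (i, j) : ℂ))
        = lam * ∑ j, v j * (x (i, j) : ℂ) := by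
    intro x
    simp only [mulVec, dotProduct, Matrix.sub_apply, kroneckerMap_apply, one_apply, Matrix.mul_apply,
      Fintype.sum_prod_type]
    push_cast
    simp only [apply_ite Complex.ofReal, Complex.ofReal_one, Complex.ofReal_zero]
    have key' : ∀ j : Fin n,
        ∑ x_2 : Fin N, ∑ x_3 : Fin n,
          ((if i = x_2 then (1:ℂ) else 0) * (A j x_3 : ℂ) - (Ltil i x_2 : ℂ) * ∑ p, (B j p : ℂ) * (K p x_3 : ℂ)) * (x (x_2, x_3) : ℂ)
        = ∑ x_3, (A j x_3 : ℂ) * (x (i, x_3) : ℂ)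
          - ∑ x_2 : Fin N, ∑ x_3 : Fin n, ((Ltil i x_2 : ℂ) * ∑ p, (B j p : ℂ) * (K p x_3 : ℂ)) * (x (x_2, x_3) : ℂ) := by
      intro j
      simp only [sub_mul, Finset.sum_sub_distrib, ite_mul, one_mul, zero_mul]
      congr 1
      rw [Finset.sum_comm]
      simp [Finset.sum_ite_eq']
    simp only [key', mul_sub, Finset.sum_sub_distrib]
    have h1 : ∑ j : Fin n, v j * ∑ x_3, (A j x_3 : ℂ) * (x (i, x_3) : ℂ)
        = lam * ∑ j, v j * (x (i, j) : ℂ) := by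
      simp only [Finset.mul_sum]
      rw [Finset.sum_comm]
      refine Finset.sum_congr rfl fun l _ => ?_
      calc ∑ j, v j * ((A j l : ℂ) * (x (i, l) : ℂ))
          = (∑ j, (A j l : ℂ) * v j) * (x (i, l) : ℂ) := by
            rw [Finset.sum_mul]; exact Finset.sum_congr rfl fun j _ => by ring
        _ = lam * (v l * (x (i, l) : ℂ)) := by rw [hA l]; ring
    have hj : ∀ j : Fin n,
        v j * ∑ x_2 : Fin N, ∑ x_3 : Fin n,
          ((Ltil i x_2 : ℂ) * ∑ p, (B j p : ℂ) * (K p x_3 : ℂ)) * (x (x_2, x_3) : ℂ)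
        = ∑ p, (∑ x_2 : Fin N, ∑ x_3 : Fin n,
            (Ltil i x_2 : ℂ) * (K p x_3 : ℂ) * (x (x_2, x_3) : ℂ)) * ((B j p : ℂ) * v j) := by
      intro j
      have step : ∀ (k : Fin N) (l : Fin n),
          v j * (((Ltil i k : ℂ) * ∑ p, (B j p : ℂ) * (K p l : ℂ)) * (x (k, l) : ℂ))
          = ∑ p, ((Ltil i k : ℂ) * (K p l : ℂ) * (x (k, l) : ℂ)) * ((B j p : ℂ) * v j) := by
        intro k l
        simp only [Finset.mul_sum, Finset.sum_mul]
        exact Finset.sum_congr rfl fun p _ => by ring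
      calc v j * ∑ x_2, ∑ x_3, ((Ltil i x_2 : ℂ) * ∑ p, (B j p : ℂ) * (K p x_3 : ℂ)) * (x (x_2, x_3) : ℂ)
          = ∑ x_2, ∑ x_3, ∑ p, ((Ltil i x_2 : ℂ) * (K p x_3 : ℂ) * (x (x_2, x_3) : ℂ)) * ((B j p : ℂ) * v j) := by
            rw [Finset.mul_sum]
            refine Finset.sum_congr rfl fun k _ => ?_
            rw [Finset.mul_sum]
            exact Finset.sum_congr rfl fun l _ => step k l
        _ = ∑ p, ∑ x_2, ∑ x_3, ((Ltil i x_2 : ℂ) * (K p x_3 : ℂ) * (x (x_2, x_3) : ℂ)) * ((B j p : ℂ) * v j) := by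
            exact (Finset.sum_congr rfl fun k _ => Finset.sum_comm).trans Finset.sum_comm
        _ = ∑ p, (∑ x_2, ∑ x_3, (Ltil i x_2 : ℂ) * (K p x_3 : ℂ) * (x (x_2, x_3) : ℂ)) * ((B j p : ℂ) * v j) := by
            simp only [Finset.sum_mul]
    have h2 : ∑ j : Fin n, v j * ∑ x_2 : Fin N, ∑ x_3 : Fin n,
        ((Ltil i x_2 : ℂ) * ∑ p, (B j p : ℂ) * (K p x_3 : ℂ)) * (x (x_2, x_3) : ℂ) = 0 := by
      simp only [hj]
      rw [Finset.sum_comm]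
      refine Finset.sum_eq_zero fun p _ => ?_
      rw [← Finset.mul_sum, hB p, mul_zero]
    rw [h1, h2, sub_zero]
  -- y satisfies y' = lam * y
  have hy : ∀ t, HasDerivAt y (lam * y t) t := by
    intro t
    have h1 : ∀ p : Fin N × Fin n, HasDerivAt (fun s => e s p)
        (((((1 : Matrix (Fin N) (Fin N) ℝ) ⊗ₖ A) - Ltil ⊗ₖ (B * K)) *ᵥ e t) p) t :=
      (hasDerivAt_pi.mp (he t))
    have h2 : HasDerivAt y
        (∑ j, v j * ((((((1 : Matrix (Fin N) (Fin N) ℝ) ⊗ₖ A) - Ltil ⊗ₖ (B * K)) *ᵥ e t) (i, j) : ℂ))) t := by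
      exact HasDerivAt.fun_sum fun j _ => ((h1 (i, j)).ofReal_comp).const_mul (v j)
    rw [key (e t)] at h2
    exact h2
  -- solve the ODE: y t = exp (lam * t) * y 0
  have hsol : ∀ t : ℝ, y t = Complex.exp (lam * t) * y 0 := by
    have hz : ∀ t : ℝ, HasDerivAt (fun s : ℝ => Complex.exp (-(lam * s)) * y s)
        (0 : ℂ) t := by
      intro t
      have hofReal : HasDerivAt (fun s : ℝ => (s : ℂ)) 1 t := by
        simpa using (hasDerivAt_id t).ofReal_comp
      have hexp : HasDerivAt (fun s : ℝ => Complex.exp (-(lam * s)))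
          (-lam * Complex.exp (-(lam * t))) t := by
        have : HasDerivAt (fun s : ℝ => -(lam * (s : ℂ))) (-lam) t := by
          simpa using ((hofReal.const_mul lam).fun_neg)
        simpa [mul_comm] using this.cexp
      have := hexp.fun_mul (hy t)
      convert this using 1
      rfl
      ring
    have hconst : ∀ t : ℝ, Complex.exp (-(lam * t)) * y t
        = Complex.exp (-(lam * 0)) * y 0 := by
      intro t
      have hdiff : Differentiable ℝ (fun s : ℝ => Complex.exp (-(lam * s)) * y s) :=
        fun s => (hz s).differentiableAt
      exact is_const_of_deriv_eq_zero hdiff (fun s => (hz s).deriv) t 0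
    intro t
    have h := hconst t
    rw [mul_zero, neg_zero, Complex.exp_zero, one_mul] at h
    rw [← h, ← mul_assoc, ← Complex.exp_add]
    simp
  -- norm lower bound
  have hnorm : ∀ t : ℝ, 0 ≤ t → ‖y 0‖ ≤ ‖y t‖ := by
    intro t ht
    rw [hsol t, norm_mul]
    have : ‖Complex.exp (lam * t)‖ = Real.exp ((lam * t).re) := Complex.norm_exp _
    rw [this]
    have hres : (lam * (t : ℂ)).re = lam.re * t := by simp [Complex.mul_re]
    rw [hres]
    nlinarith [Real.one_le_exp (mul_nonneg hre ht), norm_nonneg (y 0),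
      Real.exp_pos (lam.re * t)]
  have hy0 : (0 : ℝ) < ‖y 0‖ := norm_pos_iff.mpr h0
  have first : ¬ Tendsto y atTop (nhds 0) := by
    intro h
    have := (NormedAddCommGroup.tendsto_nhds_zero.mp h) ‖y 0‖ hy0
    obtain ⟨t, ht0, ht⟩ := ((this.and (eventually_ge_atTop (0:ℝ))).exists)
    exact absurd ht0 (not_lt.mpr (hnorm t ht))
  refine ⟨first, fun h => first ?_⟩
  have hcont : Continuous fun x : Fin N × Fin n → ℝ => ∑ j, v j * (x (i, j) : ℂ) := by
    refine continuous_finset_sum _ fun j _ => continuous_const.mul ?_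
    exact Complex.continuous_ofReal.comp (continuous_apply ((i, j) : Fin N × Fin n))
  have := (hcont.tendsto 0).comp h
  have h' : Tendsto y atTop (nhds (∑ j, v j * ((0 : Fin N × Fin n → ℝ) (i, j) : ℂ))) := this
  simpa using h'
end

section
/- Let L^∞ = diag(c₁L₁₁^∞,…,c_pL_pp^∞) + L₀^∞ (block decomposition), and let Ξ = diag(Ξ₁,…,Ξ_p) be positive diagonal. If for every block k, Ξ_k L_kk^∞ + (L_kk^∞)ᵀΞ_k ≻ 0 and c_k > -λ_min(ΞL₀^∞ + (L₀^∞)ᵀΞ)/λ_min(Ξ_k L_kk^∞ + (L_kk^∞)ᵀΞ_k), then ΞL^∞ + (L^∞)ᵀΞ ≻ 0. -/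
open Matrix

/-- Quadratic-form lower bound via the minimum eigenvalue. -/
lemma quad_lower_bound {n : Type*} [Fintype n] [DecidableEq n] [Nonempty n]
    {A : Matrix n n ℝ} (hA : A.IsHermitian) (x : n → ℝ) :
    (⨅ i, hA.eigenvalues i) * (x ⬝ᵥ x) ≤ x ⬝ᵥ (A *ᵥ x) := by
  set μ := ⨅ i, hA.eigenvalues i with hμ
  have hP : (A - μ • 1).PosSemidef := by
    have hspec := hA.spectral_theorem
    simp only [Unitary.conjStarAlgAut_apply, Unitary.coe_star] at hspec
    have hU : (hA.eigenvectorUnitary : Matrix n n ℝ) *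
        (star (hA.eigenvectorUnitary : Matrix n n ℝ)) = 1 :=
      (Matrix.mem_unitaryGroup_iff).mp hA.eigenvectorUnitary.2
    have key : A - μ • 1 = (hA.eigenvectorUnitary : Matrix n n ℝ) *
        diagonal (fun i => hA.eigenvalues i - μ) *
        (star (hA.eigenvectorUnitary : Matrix n n ℝ)) := by
      have hdi : diagonal (fun i => hA.eigenvalues i - μ)
          = diagonal (RCLike.ofReal ∘ hA.eigenvalues) - μ • (1 : Matrix n n ℝ) := by
        ext i j
        by_cases h : i = j <;>
          simp [Matrix.diagonal_apply, h, Matrix.one_apply, Function.comp]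
      rw [hdi, Matrix.mul_sub, Matrix.sub_mul, ← hspec]
      congr 1
      rw [Matrix.mul_smul, Matrix.smul_mul, Matrix.mul_one, hU]
    rw [key]
    have hd : (diagonal (fun i => hA.eigenvalues i - μ)).PosSemidef := by
      refine posSemidef_diagonal_iff.mpr fun i => ?_
      simp only [sub_nonneg, hμ]
      exact ciInf_le (Set.Finite.bddBelow (Set.finite_range _)) i
    have := hd.mul_mul_conjTranspose_same (hA.eigenvectorUnitary : Matrix n n ℝ)
    exact this
  have h2 := hP.dotProduct_mulVec_nonneg x
  have hs : star x = x := by simp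
  rw [hs] at h2
  have heq : x ⬝ᵥ ((A - μ • 1) *ᵥ x) = x ⬝ᵥ (A *ᵥ x) - μ * (x ⬝ᵥ x) := by
    rw [Matrix.sub_mulVec, dotProduct_sub, Matrix.smul_mulVec, Matrix.one_mulVec,
      dotProduct_smul]
    simp [smul_eq_mul]
  rw [heq] at h2
  linarith

/-- Quadratic form of a dependent block diagonal matrix decomposes as a sum over blocks. -/
lemma dotProduct_blockDiagonal'_mulVec {p : ℕ} {mdim : Fin p → ℕ}
    (M : ∀ k : Fin p, Matrix (Fin (mdim k)) (Fin (mdim k)) ℝ)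
    (x : ((k : Fin p) × Fin (mdim k)) → ℝ) :
    x ⬝ᵥ (Matrix.blockDiagonal' M *ᵥ x)
      = ∑ k, (fun i => x ⟨k, i⟩) ⬝ᵥ (M k *ᵥ fun i => x ⟨k, i⟩) := by
  simp only [dotProduct, mulVec]
  rw [← Finset.univ_sigma_univ, Finset.sum_sigma]
  refine Finset.sum_congr rfl fun k _ => ?_
  refine Finset.sum_congr rfl fun i _ => ?_
  congr 1
  rw [Finset.sum_sigma]
  rw [Finset.sum_eq_single k]
  · simp [Matrix.blockDiagonal'_apply_eq]
  · intro l _ hlk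
    apply Finset.sum_eq_zero
    intro j _
    rw [Matrix.blockDiagonal'_apply_ne _ _ _ (fun h => hlk h.symm), zero_mul]
  · simp

/-- Coupling-strength threshold (Theorem 1): with `L^∞ = diag(c₁L₁₁^∞,…,c_pL_pp^∞) + L₀^∞`
and positive diagonal `Ξ = diag(Ξ₁,…,Ξ_p)`, if each `Ξ_k L_kk^∞ + (L_kk^∞)ᵀ Ξ_k ≻ 0` and
`c_k > -λ_min(ΞL₀^∞ + (L₀^∞)ᵀΞ) / λ_min(Ξ_k L_kk^∞ + (L_kk^∞)ᵀΞ_k)` (with `c_k > 0`),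
then `ΞL^∞ + (L^∞)ᵀΞ ≻ 0`. Nodes are indexed by the sigma type `(k : Fin p) × Fin (mdim k)`. -/
theorem coupling_strength_threshold {p : ℕ} [NeZero p] (mdim : Fin p → ℕ)
    [∀ k, NeZero (mdim k)]
    (Lkk Xik : ∀ k : Fin p, Matrix (Fin (mdim k)) (Fin (mdim k)) ℝ)
    (c : Fin p → ℝ)
    (L0 : Matrix ((k : Fin p) × Fin (mdim k)) ((k : Fin p) × Fin (mdim k)) ℝ)
    (hXid : ∀ k, (Xik k).IsDiag) (hXip : ∀ k, (Xik k).PosDef)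
    (hH0 : (Matrix.blockDiagonal' Xik * L0 + L0ᵀ * Matrix.blockDiagonal' Xik).IsHermitian)
    (hHk : ∀ k, (Xik k * Lkk k + (Lkk k)ᵀ * Xik k).PosDef)
    (hcpos : ∀ k, 0 < c k)
    (hc : ∀ k, c k > -(⨅ i, hH0.eigenvalues i) / (⨅ i, (hHk k).1.eigenvalues i)) :
    (Matrix.blockDiagonal' Xik
        * (Matrix.blockDiagonal' (fun k => c k • Lkk k) + L0)
      + (Matrix.blockDiagonal' (fun k => c k • Lkk k) + L0)ᵀ
        * Matrix.blockDiagonal' Xik).PosDef := by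
  classical
  set H0 := Matrix.blockDiagonal' Xik * L0 + L0ᵀ * Matrix.blockDiagonal' Xik with hH0def
  set Hk : ∀ k : Fin p, Matrix (Fin (mdim k)) (Fin (mdim k)) ℝ :=
    fun k => Xik k * Lkk k + (Lkk k)ᵀ * Xik k with hHkdef
  set μ0 := ⨅ i, hH0.eigenvalues i with hμ0
  have hsplit : (Matrix.blockDiagonal' Xik
        * (Matrix.blockDiagonal' (fun k => c k • Lkk k) + L0)
      + (Matrix.blockDiagonal' (fun k => c k • Lkk k) + L0)ᵀ
        * Matrix.blockDiagonal' Xik)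
      = Matrix.blockDiagonal' (fun k => c k • Hk k) + H0 := by
    have h1 : Matrix.blockDiagonal' Xik * Matrix.blockDiagonal' (fun k => c k • Lkk k)
        = Matrix.blockDiagonal' (fun k => c k • (Xik k * Lkk k)) := by
      rw [← blockDiagonal'_mul]
      exact congrArg _ (funext fun k => Matrix.mul_smul _ _ _)
    have h2 : Matrix.blockDiagonal' (fun k => (c k • Lkk k)ᵀ) * Matrix.blockDiagonal' Xik
        = Matrix.blockDiagonal' (fun k => c k • ((Lkk k)ᵀ * Xik k)) := by
      rw [← blockDiagonal'_mul]
      refine congrArg _ (funext fun k => ?_)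
      rw [Matrix.transpose_smul, Matrix.smul_mul]
    have h3 : Matrix.blockDiagonal' (fun k => c k • (Xik k * Lkk k))
        + Matrix.blockDiagonal' (fun k => c k • ((Lkk k)ᵀ * Xik k))
        = Matrix.blockDiagonal' (fun k => c k • Hk k) := by
      rw [← blockDiagonal'_add]
      exact congrArg _ (funext fun k => (smul_add (c k) _ _).symm)
    rw [Matrix.mul_add, transpose_add, Matrix.add_mul, blockDiagonal'_transpose, h1, h2,
      hH0def, ← h3]
    abel
  rw [hsplit]
  have hHkherm : ∀ k, (Hk k)ᵀ = Hk k := by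
    intro k
    have := (hHk k).1
    rwa [Matrix.IsHermitian, conjTranspose_eq_transpose_of_trivial] at this
  have hbd : (Matrix.blockDiagonal' (fun k => c k • Hk k)).IsHermitian := by
    rw [Matrix.IsHermitian, conjTranspose_eq_transpose_of_trivial, blockDiagonal'_transpose]
    refine congrArg _ (funext fun k => ?_)
    rw [Matrix.transpose_smul, hHkherm k]
  have hherm : (Matrix.blockDiagonal' (fun k => c k • Hk k) + H0).IsHermitian := hbd.add hH0
  refine posDef_iff_dotProduct_mulVec.mpr ⟨hherm, fun x hx => ?_⟩
  have hs : star x = x := by simp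
  rw [hs]
  set y : ∀ k : Fin p, Fin (mdim k) → ℝ := fun k i => x ⟨k, i⟩ with hy
  have hblock : x ⬝ᵥ (Matrix.blockDiagonal' (fun k => c k • Hk k) *ᵥ x)
      = ∑ k : Fin p, c k * (y k ⬝ᵥ (Hk k *ᵥ y k)) := by
    rw [dotProduct_blockDiagonal'_mulVec]
    refine Finset.sum_congr rfl fun k _ => ?_
    rw [Matrix.smul_mulVec, dotProduct_smul, smul_eq_mul]
  have hdot : x ⬝ᵥ x = ∑ k : Fin p, (y k ⬝ᵥ y k) := by
    simp only [dotProduct]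
    rw [← Finset.univ_sigma_univ, Finset.sum_sigma]
  have hquad : x ⬝ᵥ ((Matrix.blockDiagonal' (fun k => c k • Hk k) + H0) *ᵥ x)
      = (∑ k : Fin p, c k * (y k ⬝ᵥ (Hk k *ᵥ y k))) + x ⬝ᵥ (H0 *ᵥ x) := by
    rw [Matrix.add_mulVec, dotProduct_add, hblock]
  rw [hquad]
  have hμk_pos : ∀ k, 0 < ⨅ i, (hHk k).1.eigenvalues i := by
    intro k
    obtain ⟨i, hi⟩ := exists_eq_ciInf_of_finite (f := (hHk k).1.eigenvalues)
    rw [← hi]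
    exact (hHk k).eigenvalues_pos i
  have hH0bound : μ0 * (x ⬝ᵥ x) ≤ x ⬝ᵥ (H0 *ᵥ x) := quad_lower_bound hH0 x
  have hHkbound : ∀ k, (⨅ i, (hHk k).1.eigenvalues i) * (y k ⬝ᵥ y k) ≤ y k ⬝ᵥ (Hk k *ᵥ y k) :=
    fun k => quad_lower_bound (hHk k).1 (y k)
  have hkey : ∀ k, 0 < c k * (⨅ i, (hHk k).1.eigenvalues i) + μ0 := by
    intro k
    have h := hc k
    rw [gt_iff_lt, div_lt_iff₀ (hμk_pos k)] at h
    linarith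
  have hyk_nonneg : ∀ k, (0:ℝ) ≤ y k ⬝ᵥ y k :=
    fun k => Finset.sum_nonneg fun i _ => mul_self_nonneg _
  have hsum_lb : ∑ k : Fin p, (c k * (⨅ i, (hHk k).1.eigenvalues i) + μ0) * (y k ⬝ᵥ y k)
      ≤ (∑ k : Fin p, c k * (y k ⬝ᵥ (Hk k *ᵥ y k))) + x ⬝ᵥ (H0 *ᵥ x) := by
    have hre : ∑ k : Fin p, (c k * (⨅ i, (hHk k).1.eigenvalues i) + μ0) * (y k ⬝ᵥ y k)
        = (∑ k : Fin p, c k * ((⨅ i, (hHk k).1.eigenvalues i) * (y k ⬝ᵥ y k)))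
          + μ0 * (x ⬝ᵥ x) := by
      rw [hdot, Finset.mul_sum, ← Finset.sum_add_distrib]
      refine Finset.sum_congr rfl fun k _ => ?_
      ring
    rw [hre]
    refine add_le_add ?_ hH0bound
    refine Finset.sum_le_sum fun k _ => ?_
    exact mul_le_mul_of_nonneg_left (hHkbound k) (hcpos k).le
  refine lt_of_lt_of_le ?_ hsum_lb
  have hex : ∃ k, y k ≠ 0 := by
    by_contra h
    push_neg at h
    apply hx
    funext ki
    obtain ⟨k, i⟩ := ki
    have := congrFun (h k) i
    simpa [hy] using this
  obtain ⟨k0, hk0⟩ := hex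
  have hy0pos : 0 < y k0 ⬝ᵥ y k0 := by
    rcases (hyk_nonneg k0).lt_or_eq with h | h
    · exact h
    · exact absurd (dotProduct_self_eq_zero.mp h.symm) hk0
  refine Finset.sum_pos' (fun k _ => ?_) ⟨k0, Finset.mem_univ k0, ?_⟩
  · exact mul_nonneg (hkey k).le (hyk_nonneg k)
  · exact mul_pos (hkey k0) hy0pos
end

section
/- Under the in-degree balance condition, the cluster synchronization manifold M = {x ∈ ℝ^{Nn} : x_i = x_j whenever i,j are in the same cluster} is invariant for the dynamics ẋ = (I⊗A)x - (L⊗BK)x, i.e., if x(0) ∈ M then x(t) ∈ M for all t. -/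
open Matrix Kronecker

/-- Invariance of the cluster synchronization manifold (Theorem 3 setup): under the
in-degree balance condition, the manifold `M = {x : x_i = x_j whenever cl i = cl j}` is
invariant for `ẋ = (I ⊗ A)x - (L ⊗ BK)x`, where `L` is the graph Laplacian of the weights
`a`: any solution starting in `M` remains in `M` for all time. -/
theorem cluster_manifold_invariant {N p n m : ℕ}
    (a : Fin N → Fin N → ℝ) (cl : Fin N → Fin p)
    (A : Matrix (Fin n) (Fin n) ℝ) (B : Matrix (Fin n) (Fin m) ℝ)
    (K : Matrix (Fin m) (Fin n) ℝ)
    (hbal : ∀ i : Fin N, ∀ ℓ : Fin p, cl i ≠ ℓ →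
      ∑ j ∈ Finset.filter (fun j => cl j = ℓ) Finset.univ, a i j = 0)
    (L : Matrix (Fin N) (Fin N) ℝ)
    (hL : ∀ i j, L i j = (if i = j then ∑ k, a i k else 0) - a i j)
    (x : ℝ → (Fin N × Fin n → ℝ))
    (hx : ∀ t, HasDerivAt x
      ((((1 : Matrix (Fin N) (Fin N) ℝ) ⊗ₖ A) - L ⊗ₖ (B * K)) *ᵥ x t) t)
    (h0 : ∀ i j : Fin N, cl i = cl j → ∀ d, x 0 (i, d) = x 0 (j, d)) :
    ∀ t : ℝ, ∀ i j : Fin N, cl i = cl j → ∀ d, x t (i, d) = x t (j, d) := by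
  classical
  set F : Matrix (Fin N × Fin n) (Fin N × Fin n) ℝ :=
    (((1 : Matrix (Fin N) (Fin N) ℝ) ⊗ₖ A) - L ⊗ₖ (B * K)) with hF
  -- the predicate defining the synchronization manifold
  have hLzero : ∀ v : Fin N × Fin n → ℝ,
      (∀ i j : Fin N, cl i = cl j → ∀ d, v (i, d) = v (j, d)) →
      ∀ i e, ∑ j, L i j * v (j, e) = 0 := by
    intro v hv i e
    have hfib : ∀ ℓ : Fin p,
        ∑ j ∈ Finset.filter (fun j => cl j = ℓ) Finset.univ, a i j * v (j, e)
          = (∑ j ∈ Finset.filter (fun j => cl j = ℓ) Finset.univ, a i j) * v (i, e) := by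
      intro ℓ
      by_cases hℓ : cl i = ℓ
      · rw [Finset.sum_mul]
        refine Finset.sum_congr rfl fun j hj => ?_
        have hj' : cl j = ℓ := (Finset.mem_filter.1 hj).2
        rw [hv j i (hj'.trans hℓ.symm) e]
      · rw [hbal i ℓ hℓ, zero_mul]
        rcases (Finset.filter (fun j => cl j = ℓ) Finset.univ).eq_empty_or_nonempty with
          h | ⟨j0, hj0⟩
        · rw [h, Finset.sum_empty]
        · have hj0' : cl j0 = ℓ := (Finset.mem_filter.1 hj0).2
          calc ∑ j ∈ Finset.filter (fun j => cl j = ℓ) Finset.univ, a i j * v (j, e)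
              = ∑ j ∈ Finset.filter (fun j => cl j = ℓ) Finset.univ, a i j * v (j0, e) := by
                refine Finset.sum_congr rfl fun j hj => ?_
                have hj' : cl j = ℓ := (Finset.mem_filter.1 hj).2
                rw [hv j j0 (hj'.trans hj0'.symm) e]
            _ = (∑ j ∈ Finset.filter (fun j => cl j = ℓ) Finset.univ, a i j) * v (j0, e) := by
                rw [Finset.sum_mul]
            _ = 0 := by rw [hbal i ℓ hℓ, zero_mul]
    have hsum : ∑ j, a i j * v (j, e) = (∑ j, a i j) * v (i, e) := by
      rw [← Finset.sum_fiberwise_of_maps_to (fun j _ => Finset.mem_univ (cl j))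
            (fun j => a i j * v (j, e)),
          ← Finset.sum_fiberwise_of_maps_to (fun j _ => Finset.mem_univ (cl j))
            (fun j => a i j), Finset.sum_mul]
      exact Finset.sum_congr rfl fun ℓ _ => hfib ℓ
    have : ∑ j, L i j * v (j, e)
        = (∑ j, (if i = j then (∑ k, a i k) * v (j, e) else 0)) - ∑ j, a i j * v (j, e) := by
      rw [← Finset.sum_sub_distrib]
      refine Finset.sum_congr rfl fun j _ => ?_
      rw [hL i j, sub_mul, ite_mul, zero_mul]
    rw [this, Finset.sum_ite_eq Finset.univ i (fun j => (∑ k, a i k) * v (j, e)),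
        if_pos (Finset.mem_univ i), hsum, sub_self]
  -- the Kronecker matrix acts on the manifold simply via `A`
  have hFapply : ∀ v : Fin N × Fin n → ℝ,
      (∀ i j : Fin N, cl i = cl j → ∀ d, v (i, d) = v (j, d)) →
      ∀ i d, (F *ᵥ v) (i, d) = ∑ e, A d e * v (i, e) := by
    intro v hv i d
    have hstep : (F *ᵥ v) (i, d)
        = ∑ j, ∑ e, ((if i = j then (1 : ℝ) else 0) * A d e - L i j * (B * K) d e) * v (j, e) := by
      simp [hF, Matrix.mulVec, dotProduct, Fintype.sum_prod_type, Matrix.sub_apply,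
        Matrix.kroneckerMap_apply, Matrix.one_apply]
    have hsecond : ∑ j, ∑ e, L i j * (B * K) d e * v (j, e) = 0 := by
      rw [Finset.sum_comm]
      refine Finset.sum_eq_zero fun e _ => ?_
      have h0' := hLzero v hv i e
      calc ∑ j, L i j * (B * K) d e * v (j, e)
          = (B * K) d e * ∑ j, L i j * v (j, e) := by
            rw [Finset.mul_sum]; exact Finset.sum_congr rfl fun j _ => by ring
        _ = 0 := by rw [h0', mul_zero]
    have hfirst : ∑ j, ∑ e, (if i = j then (1 : ℝ) else 0) * A d e * v (j, e)
        = ∑ e, A d e * v (i, e) := by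
      have : ∀ j, ∑ e, (if i = j then (1 : ℝ) else 0) * A d e * v (j, e)
          = if i = j then ∑ e, A d e * v (j, e) else 0 := by
        intro j
        by_cases h : i = j <;> simp [h]
      simp_rw [this]
      rw [Finset.sum_ite_eq Finset.univ i (fun j => ∑ e, A d e * v (j, e)),
        if_pos (Finset.mem_univ i)]
    calc (F *ᵥ v) (i, d)
        = ∑ j, ∑ e, ((if i = j then (1 : ℝ) else 0) * A d e * v (j, e)
            - L i j * (B * K) d e * v (j, e)) := by
          rw [hstep]; exact Finset.sum_congr rfl fun j _ => Finset.sum_congr rfl fun e _ => by ring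
      _ = (∑ j, ∑ e, (if i = j then (1 : ℝ) else 0) * A d e * v (j, e))
            - ∑ j, ∑ e, L i j * (B * K) d e * v (j, e) := by
          rw [← Finset.sum_sub_distrib]
          exact Finset.sum_congr rfl fun j _ => by rw [Finset.sum_sub_distrib]
      _ = ∑ e, A d e * v (i, e) := by rw [hsecond, hfirst, sub_zero]
  -- the synchronization manifold as a submodule
  let S : Submodule ℝ (Fin N × Fin n → ℝ) :=
    { carrier := {v | ∀ i j : Fin N, cl i = cl j → ∀ d, v (i, d) = v (j, d)}
      add_mem' := fun hu hv i j h d => by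
        simp only [Pi.add_apply]; rw [hu i j h d, hv i j h d]
      zero_mem' := fun i j h d => rfl
      smul_mem' := fun c v hv i j h d => by
        simp only [Pi.smul_apply]; rw [hv i j h d] }
  have hSF : ∀ v ∈ S, F *ᵥ v ∈ S := by
    intro v hv i j hij d
    rw [hFapply v hv i d, hFapply v hv j d]
    exact Finset.sum_congr rfl fun e _ => by rw [hv i j hij e]
  -- the dynamics as a continuous linear map
  let f : (Fin N × Fin n → ℝ) →L[ℝ] (Fin N × Fin n → ℝ) :=
    LinearMap.toContinuousLinearMap (Matrix.mulVecLin F)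
  have hf_apply : ∀ v, f v = F *ᵥ v := fun v => rfl
  -- explicit solution via the operator exponential
  let g : ℝ → (Fin N × Fin n → ℝ) := fun t => NormedSpace.exp (t • f) (x 0)
  have hg0 : g 0 = x 0 := by
    show NormedSpace.exp ((0 : ℝ) • f) (x 0) = x 0
    rw [zero_smul, NormedSpace.exp_zero, ContinuousLinearMap.one_apply]
  have hg' : ∀ t : ℝ, HasDerivAt g (f (g t)) t := by
    intro t
    have h1 : HasDerivAt (fun u : ℝ => NormedSpace.exp (u • f))
        (f * NormedSpace.exp (t • f)) t := hasDerivAt_exp_smul_const' f t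
    have h2 := h1.clm_apply (hasDerivAt_const t (x 0))
    simpa [ContinuousLinearMap.mul_apply] using h2
  have hx0S : x 0 ∈ S := fun i j h d => h0 i j h d
  have hgS : ∀ t : ℝ, g t ∈ S := by
    intro t
    have hterm : ∀ k : ℕ, ((t • f) ^ k) (x 0) ∈ S := by
      intro k
      induction k with
      | zero => simpa using hx0S
      | succ k ih =>
        rw [pow_succ']
        rw [ContinuousLinearMap.mul_apply]
        have hfS : f (((t • f) ^ k) (x 0)) ∈ S := by
          rw [hf_apply]; exact hSF _ ih
        simpa [ContinuousLinearMap.smul_apply] using S.smul_mem t hfS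
    have hsum := NormedSpace.exp_series_hasSum_exp' (𝕂 := ℝ) (t • f)
    have hsum2 := hsum.mapL (ContinuousLinearMap.apply ℝ (Fin N × Fin n → ℝ) (x 0))
    have htend := hsum2.tendsto_sum_nat
    have hclosed : IsClosed (S : Set (Fin N × Fin n → ℝ)) := S.closed_of_finiteDimensional
    have hmem := hclosed.mem_of_tendsto htend (Filter.Eventually.of_forall fun k => by
      refine S.sum_mem fun b _ => ?_
      simp only [ContinuousLinearMap.apply_apply, ContinuousLinearMap.smul_apply]
      exact S.smul_mem _ (hterm b))
    simpa [ContinuousLinearMap.apply_apply] using hmem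
  -- uniqueness of solutions of the linear ODE
  have huniq : ∀ t : ℝ, x t = g t := by
    intro t
    have hab : (0 : ℝ) ∈ Set.Ioo (-(|t| + 1)) (|t| + 1) := by
      constructor <;> nlinarith [abs_nonneg t]
    have ht : t ∈ Set.Ioo (-(|t| + 1)) (|t| + 1) := by
      constructor <;> nlinarith [neg_abs_le t, le_abs_self t]
    have := ODE_solution_unique_of_mem_Ioo (v := fun _ y => f y)
      (s := fun _ => (Set.univ : Set (Fin N × Fin n → ℝ))) (K := ‖f‖₊)
      (fun _ _ => f.lipschitz.lipschitzOnWith) hab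
      (fun s _ => ⟨by simpa [hf_apply] using hx s, trivial⟩)
      (fun s _ => ⟨hg' s, trivial⟩) hg0.symm
    exact this ht
  intro t i j hcl d
  rw [huniq t]
  exact hgS t i j hcl d
end
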